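/- Let p, q, r be pairwise coprime positive integers greater than 1. Then (1 - x^{pqr})(1 - x^p)(1 - x^q)(1 - x^r) is divisible by (1 - x^{qr})(1 - x^{rp})(1 - x^{pq})(1 - x) in the polynomial ring ℤ[x], i.e., the inclusion–exclusion polynomial Q_{{p,q,r}}(x) = (1-x^{pqr})(1-x^p)(1-x^q)(1-x^r) / ((1-x^{qr})(1-x^{rp})(1-x^{pq})(1-x)) has integer coefficients. -/
import Mathlib

open Polynomial in
/-- For pairwise coprime `p, q, r > 1`, `(1-x^{qr})(1-x^{rp})(1-x^{pq})(1-x)` divides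
`(1-x^{pqr})(1-x^p)(1-x^q)(1-x^r)` in `ℤ[x]`. -/
theorem stmt12 (p q r : ℕ) (hp : 1 < p) (hq : 1 < q) (hr : 1 < r)
    (hpq : Nat.Coprime p q) (hqr : Nat.Coprime q r) (hrp : Nat.Coprime r p) :
    ((1 - X ^ (q * r)) * (1 - X ^ (r * p)) * (1 - X ^ (p * q)) * (1 - X) : ℤ[X]) ∣
      (1 - X ^ (p * q * r)) * (1 - X ^ p) * (1 - X ^ q) * (1 - X ^ r) := by
  have hp0 : 0 < p := by omega
  have hq0 : 0 < q := by omega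
  have hr0 : 0 < r := by omega
  -- Reduce to (X^n - 1) form
  have key : ((X ^ (q * r) - 1) * (X ^ (r * p) - 1) * (X ^ (p * q) - 1) * (X - 1) : ℤ[X]) ∣
      (X ^ (p * q * r) - 1) * (X ^ p - 1) * (X ^ q - 1) * (X ^ r - 1) := by
    -- express each X^n - 1 as product of cyclotomics over the multiset of divisors
    have hcyc : ∀ n : ℕ, 0 < n →
        (X ^ n - 1 : ℤ[X]) = (Multiset.map (fun d => cyclotomic d ℤ) (Nat.divisors n).val).prod := by
      intro n hn
      rw [← Polynomial.prod_cyclotomic_eq_X_pow_sub_one hn ℤ]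
      rfl
    rw [hcyc _ (by positivity), hcyc _ (by positivity), hcyc _ (by positivity),
        hcyc _ (by positivity : (0:ℕ) < p*q*r), hcyc _ hp0, hcyc _ hq0, hcyc _ hr0,
        show (X - 1 : ℤ[X]) = X ^ 1 - 1 by ring, hcyc 1 one_pos,
        ← Multiset.prod_add, ← Multiset.prod_add, ← Multiset.prod_add,
        ← Multiset.prod_add, ← Multiset.prod_add, ← Multiset.prod_add,
        ← Multiset.map_add, ← Multiset.map_add, ← Multiset.map_add,
        ← Multiset.map_add, ← Multiset.map_add, ← Multiset.map_add]
    refine Multiset.prod_dvd_prod_of_le (Multiset.map_le_map ?_)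
    rw [Multiset.le_iff_count]
    intro d
    have hcount : ∀ n : ℕ, n ≠ 0 →
        Multiset.count d (Nat.divisors n).val = if d ∣ n then 1 else 0 := by
      intro n hn
      rw [Multiset.count_eq_of_nodup (Nat.divisors n).nodup]
      simp [Nat.mem_divisors, hn]
    simp only [Multiset.count_add]
    rw [hcount _ (by positivity), hcount _ (by positivity), hcount _ (by positivity),
        hcount 1 one_ne_zero, hcount _ (by positivity), hcount _ (by omega),
        hcount _ (by omega), hcount _ (by omega)]
    -- combinatorial inequality on indicators
    have i1 : d ∣ q * r → d ∣ p * q * r := fun h => h.trans ⟨p, by ring⟩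
    have i2 : d ∣ r * p → d ∣ p * q * r := fun h => h.trans ⟨q, by ring⟩
    have i3 : d ∣ p * q → d ∣ p * q * r := fun h => h.trans ⟨r, by ring⟩
    have j1 : d ∣ q * r → d ∣ r * p → d ∣ r := by
      intro h1 h2
      have := Nat.dvd_gcd h1 (show d ∣ p * r by rwa [mul_comm] at h2)
      rwa [Nat.gcd_mul_right, Nat.Coprime.gcd_eq_one hpq.symm, one_mul] at this
    have j2 : d ∣ r * p → d ∣ p * q → d ∣ p := by
      intro h1 h2
      have := Nat.dvd_gcd h1 (show d ∣ q * p by rwa [mul_comm] at h2)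
      rwa [Nat.gcd_mul_right, Nat.Coprime.gcd_eq_one hqr.symm, one_mul] at this
    have j3 : d ∣ p * q → d ∣ q * r → d ∣ q := by
      intro h1 h2
      have := Nat.dvd_gcd h1 (show d ∣ r * q by rwa [mul_comm] at h2)
      rwa [Nat.gcd_mul_right, Nat.Coprime.gcd_eq_one hrp.symm, one_mul] at this
    have k1 : d ∣ p → d ∣ q → d ∣ 1 := fun h1 h2 => hpq ▸ Nat.dvd_gcd h1 h2
    have k2 : d ∣ q → d ∣ r → d ∣ 1 := fun h1 h2 => hqr ▸ Nat.dvd_gcd h1 h2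
    have k3 : d ∣ r → d ∣ p → d ∣ 1 := fun h1 h2 => hrp ▸ Nat.dvd_gcd h1 h2
    have l1 : d ∣ p → d ∣ p * q * r := fun h => h.trans ⟨q * r, by ring⟩
    have l2 : d ∣ q → d ∣ p * q * r := fun h => h.trans ⟨p * r, by ring⟩
    have l3 : d ∣ r → d ∣ p * q * r := fun h => h.trans ⟨p * q, by ring⟩
    have m1 : d ∣ 1 → d ∣ p := fun h => h.trans (one_dvd _)
    have m2 : d ∣ 1 → d ∣ q := fun h => h.trans (one_dvd _)
    have m3 : d ∣ 1 → d ∣ r := fun h => h.trans (one_dvd _)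
    have n1 : d ∣ p → d ∣ r * p := fun h => h.trans ⟨r, by ring⟩
    have n2 : d ∣ p → d ∣ p * q := fun h => h.trans ⟨q, by ring⟩
    have n3 : d ∣ q → d ∣ q * r := fun h => h.trans ⟨r, by ring⟩
    have n4 : d ∣ q → d ∣ p * q := fun h => h.trans ⟨p, by ring⟩
    have n5 : d ∣ r → d ∣ q * r := fun h => h.trans ⟨q, by ring⟩
    have n6 : d ∣ r → d ∣ r * p := fun h => h.trans ⟨p, by ring⟩
    have hD1 : ∀ {n : ℕ}, d ∣ 1 → d ∣ n := fun h => h.trans (one_dvd _)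
    by_cases hA : d ∣ q * r <;> by_cases hB : d ∣ r * p <;> by_cases hC : d ∣ p * q
    · -- A B C
      have h1 := j1 hA hB; have h2 := j2 hB hC; have h3 := j3 hC hA
      have h4 := k3 h1 h2
      simp [hA, hB, hC, h1, h2, h3, h4, i1 hA]
    · -- A B ¬C
      have h1 := j1 hA hB
      have h2 : ¬ d ∣ p := fun h => hC (n2 h)
      have h3 : ¬ d ∣ q := fun h => hC (n4 h)
      have h4 : ¬ d ∣ 1 := fun h => hC (hD1 h)
      simp [hA, hB, hC, h1, h2, h3, h4, i1 hA]
    · -- A ¬B C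
      have h1 := j3 hC hA
      have h2 : ¬ d ∣ p := fun h => hB (n1 h)
      have h3 : ¬ d ∣ r := fun h => hB (n6 h)
      have h4 : ¬ d ∣ 1 := fun h => hB (hD1 h)
      simp [hA, hB, hC, h1, h2, h3, h4, i1 hA]
    · -- A ¬B ¬C
      have h2 : ¬ d ∣ p := fun h => hB (n1 h)
      have h3 : ¬ d ∣ q := fun h => hC (n4 h)
      have h5 : ¬ d ∣ r := fun h => hB (n6 h)
      have h4 : ¬ d ∣ 1 := fun h => hB (hD1 h)
      simp [hA, hB, hC, h2, h3, h4, h5, i1 hA]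
    · -- ¬A B C
      have h1 := j2 hB hC
      have h3 : ¬ d ∣ q := fun h => hA (n3 h)
      have h5 : ¬ d ∣ r := fun h => hA (n5 h)
      have h4 : ¬ d ∣ 1 := fun h => hA (hD1 h)
      simp [hA, hB, hC, h1, h3, h4, h5, i2 hB]
    · -- ¬A B ¬C
      have h2 : ¬ d ∣ p := fun h => hC (n2 h)
      have h3 : ¬ d ∣ q := fun h => hA (n3 h)
      have h5 : ¬ d ∣ r := fun h => hA (n5 h)
      have h4 : ¬ d ∣ 1 := fun h => hA (hD1 h)
      simp [hA, hB, hC, h2, h3, h4, h5, i2 hB]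
    · -- ¬A ¬B C
      have h2 : ¬ d ∣ p := fun h => hB (n1 h)
      have h3 : ¬ d ∣ q := fun h => hA (n3 h)
      have h5 : ¬ d ∣ r := fun h => hB (n6 h)
      have h4 : ¬ d ∣ 1 := fun h => hB (hD1 h)
      simp [hA, hB, hC, h2, h3, h4, h5, i3 hC]
    · -- ¬A ¬B ¬C
      have h2 : ¬ d ∣ p := fun h => hB (n1 h)
      have h3 : ¬ d ∣ q := fun h => hA (n3 h)
      have h5 : ¬ d ∣ r := fun h => hB (n6 h)
      have h4 : ¬ d ∣ 1 := fun h => hB (hD1 h)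
      simp [hA, hB, hC, h2, h3, h4, h5]
  calc ((1 - X ^ (q * r)) * (1 - X ^ (r * p)) * (1 - X ^ (p * q)) * (1 - X) : ℤ[X])
      = (X ^ (q * r) - 1) * (X ^ (r * p) - 1) * (X ^ (p * q) - 1) * (X - 1) := by ring
    _ ∣ (X ^ (p * q * r) - 1) * (X ^ p - 1) * (X ^ q - 1) * (X ^ r - 1) := key
    _ = (1 - X ^ (p * q * r)) * (1 - X ^ p) * (1 - X ^ q) * (1 - X ^ r) := by ring
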